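/- Let φ: ℝ → ℝ≥0 be even and differentiable, a > 0, and c(t,s) := (1/2)(√a · t - s/√a)². If Φ(t) := (a/2)t² - φ(t) is convex, then φ^{cc} = φ, i.e., with ψ := φ^c one has ψ(s) = inf_t {c(t,s) - φ(t)} and φ(t) = inf_s {c(t,s) - ψ(s)}. -/

import Mathlib

open Filter

/-- Subgradient inequality for a convex differentiable function on `ℝ`. -/
lemma subgrad_ineq {f : ℝ → ℝ} (hconv : ConvexOn ℝ Set.univ f)
    (hdiff : Differentiable ℝ f) (t t' : ℝ) :
    f t + deriv f t * (t' - t) ≤ f t' := by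
  rcases lt_trichotomy t t' with h | h | h
  · have := hconv.deriv_le_slope (Set.mem_univ t) (Set.mem_univ t') h (hdiff t)
    rw [slope_def_field] at this
    have ht : 0 < t' - t := sub_pos.mpr h
    have := (le_div_iff₀ ht).mp this
    linarith
  · simp [h]
  · have := hconv.slope_le_deriv (Set.mem_univ t') (Set.mem_univ t) h (hdiff t)
    rw [slope_def_field] at this
    have ht : 0 < t - t' := sub_pos.mpr h
    have := (div_le_iff₀ ht).mp this
    linarith

/-- Additive half-quadratic cost `c(t,s) = (1/2)(√a t - s/√a)²`.  If
`Φ(t) = (a/2)t² - φ(t)` is convex, then `φ^{cc} = φ`, i.e. with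
`ψ(s) = inf_t {c(t,s) - φ(t)}` one has `φ(t) = inf_s {c(t,s) - ψ(s)}`. -/
theorem stmt_1 (φ : ℝ → ℝ) (a : ℝ) (ha : 0 < a) (hnn : ∀ t, 0 ≤ φ t)
    (heven : ∀ t, φ (-t) = φ t) (hdiff : Differentiable ℝ φ)
    (hconv : ConvexOn ℝ Set.univ (fun t => a / 2 * t ^ 2 - φ t)) :
    ∀ t : ℝ,
      (⨅ s : ℝ, (((1 / 2) * (Real.sqrt a * t - s / Real.sqrt a) ^ 2 : ℝ) : EReal)
          - ⨅ t' : ℝ,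
              (((1 / 2) * (Real.sqrt a * t' - s / Real.sqrt a) ^ 2 - φ t' : ℝ) : EReal))
        = (φ t : EReal) := by
  intro t
  set Φ : ℝ → ℝ := fun t => a / 2 * t ^ 2 - φ t with hΦ
  have hΦdiff : Differentiable ℝ Φ := by
    apply Differentiable.sub _ hdiff
    exact Differentiable.const_mul (differentiable_pow 2) _
  -- cost rewrite
  have hsq : Real.sqrt a ^ 2 = a := Real.sq_sqrt ha.le
  have hs0 : Real.sqrt a ≠ 0 := by positivity
  have hc : ∀ u s : ℝ, (1 / 2) * (Real.sqrt a * u - s / Real.sqrt a) ^ 2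
      = a / 2 * u ^ 2 - u * s + s ^ 2 / (2 * a) := by
    intro u s
    field_simp
    linear_combination (Real.sqrt a ^ 2 * u ^ 2 * a - s ^ 2) * hsq
  apply le_antisymm
  · -- choose s = deriv Φ t
    set s₀ : ℝ := deriv Φ t with hs₀
    have hsub : ∀ t', Φ t + s₀ * (t' - t) ≤ Φ t' := fun t' =>
      subgrad_ineq hconv hΦdiff t t'
    -- the inner inf at s₀ equals c t s₀ - φ t
    have hinner : (⨅ t' : ℝ,
        (((1 / 2) * (Real.sqrt a * t' - s₀ / Real.sqrt a) ^ 2 - φ t' : ℝ) : EReal))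
        = (((1 / 2) * (Real.sqrt a * t - s₀ / Real.sqrt a) ^ 2 - φ t : ℝ) : EReal) := by
      apply le_antisymm (iInf_le _ t)
      apply le_iInf
      intro t'
      apply EReal.coe_le_coe_iff.mpr
      rw [hc t s₀, hc t' s₀]
      have h1 := hsub t'
      simp only [hΦ] at h1
      nlinarith [h1]
    calc (⨅ s : ℝ, (((1 / 2) * (Real.sqrt a * t - s / Real.sqrt a) ^ 2 : ℝ) : EReal)
          - ⨅ t' : ℝ,
              (((1 / 2) * (Real.sqrt a * t' - s / Real.sqrt a) ^ 2 - φ t' : ℝ) : EReal))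
        ≤ (((1 / 2) * (Real.sqrt a * t - s₀ / Real.sqrt a) ^ 2 : ℝ) : EReal)
          - ⨅ t' : ℝ,
              (((1 / 2) * (Real.sqrt a * t' - s₀ / Real.sqrt a) ^ 2 - φ t' : ℝ) : EReal) :=
          iInf_le _ s₀
      _ = (φ t : EReal) := by
          rw [hinner, ← EReal.coe_sub]
          norm_num
  · apply le_iInf
    intro s
    have h1 : (⨅ t' : ℝ,
        (((1 / 2) * (Real.sqrt a * t' - s / Real.sqrt a) ^ 2 - φ t' : ℝ) : EReal))
        ≤ (((1 / 2) * (Real.sqrt a * t - s / Real.sqrt a) ^ 2 - φ t : ℝ) : EReal) :=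
      iInf_le _ t
    have h2 := EReal.sub_le_sub
      (le_refl (((1 / 2) * (Real.sqrt a * t - s / Real.sqrt a) ^ 2 : ℝ) : EReal)) h1
    refine le_trans ?_ h2
    rw [← EReal.coe_sub]
    apply EReal.coe_le_coe_iff.mpr
    ring_nf
    exact le_refl _
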